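/- If ν₁ and ν₂ are mutually singular Borel probability measures on a Polish space (E,ρ), and d is a metric on E that is continuous with respect to ρ, then lim_{ε↓0} sup_{ζ ∈ C(ν₁,ν₂)} ζ( { (u,v) : d(u,v) ≤ ε } ) = 0. -/

import Mathlib

open MeasureTheory ProbabilityTheory Filter Topology

noncomputable section

/-- The set of couplings of two measures: probability measures on the product
whose marginals are exactly `P` and `Q`. -/
def Coupling {α : Type*} [MeasurableSpace α] (P Q : Measure α) : Set (Measure (α × α)) :=
  {ξ | IsProbabilityMeasure ξ ∧ ξ.map Prod.fst = P ∧ ξ.map Prod.snd = Q}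

/-- `d` is a second metric on `E` which is continuous with respect to the original
(Polish) topology of `E`. -/
structure IsAuxMetric {E : Type*} [TopologicalSpace E] (d : E → E → ℝ) : Prop where
  nonneg : ∀ x y, 0 ≤ d x y
  symm : ∀ x y, d x y = d y x
  triangle : ∀ x y z, d x z ≤ d x y + d y z
  eq_zero_iff : ∀ x y, d x y = 0 ↔ x = y
  cont : Continuous fun p : E × E => d p.1 p.2

/-- Tightness of a finite measure on a complete second-countable metric space. -/
lemma tight_aux {α : Type*} [MetricSpace α] [CompleteSpace α]
    [SecondCountableTopology α] [MeasurableSpace α] [OpensMeasurableSpace α]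
    (μ : Measure α) [IsFiniteMeasure μ] {r : ENNReal} (hr : r ≠ 0) :
    ∃ K : Set α, IsCompact K ∧ μ Kᶜ ≤ r := by
  rcases eq_or_ne r ⊤ with hrtop | hrtop
  · exact ⟨∅, isCompact_empty, by simp [hrtop]⟩
  rcases isEmpty_or_nonempty α with h | h
  · refine ⟨∅, isCompact_empty, ?_⟩
    simp [Set.compl_empty, Set.univ_eq_empty_iff.2 h]
  obtain ⟨u, hu⟩ := TopologicalSpace.exists_dense_seq α
  have key : ∀ n : ℕ, ∃ k : ℕ,
      μ (⋃ i ∈ Finset.range (k + 1), Metric.closedBall (u i) (1 / (n + 1)))ᶜ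
        ≤ r * 2⁻¹ ^ (n + 1) := by
    intro n
    set S : ℕ → Set α := fun k =>
      ⋃ i ∈ Finset.range (k + 1), Metric.closedBall (u i) (1 / (n + 1)) with hS
    have hSm : ∀ k, MeasurableSet (S k) := fun k =>
      MeasurableSet.biUnion (Finset.range (k + 1)).countable_toSet
        (fun i _ => measurableSet_closedBall)
    have hmono : Monotone S := by
      intro a b hab x hx
      simp only [hS, Set.mem_iUnion, Finset.mem_range, exists_prop] at hx ⊢
      obtain ⟨i, hi, hxi⟩ := hx
      exact ⟨i, by omega, hxi⟩
    have hunion : (⋃ k, S k) = Set.univ := by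
      ext x
      simp only [Set.mem_iUnion, Set.mem_univ, iff_true]
      obtain ⟨i, hi⟩ := Metric.denseRange_iff.1 hu x (1 / (n + 1)) (by positivity)
      refine ⟨i, ?_⟩
      simp only [hS, Set.mem_iUnion, Finset.mem_range, exists_prop]
      exact ⟨i, lt_add_one i, Metric.mem_closedBall.2 hi.le⟩
    have hten := tendsto_measure_iUnion_atTop (μ := μ) hmono
    rw [hunion] at hten
    have hr' : (r * 2⁻¹ ^ (n + 1)) ≠ 0 := by
      apply mul_ne_zero hr
      simp [pow_eq_zero_iff]
    rcases eq_or_ne (μ Set.univ) 0 with hμ0 | hμ0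
    · refine ⟨0, le_trans (measure_mono (Set.subset_univ _)) ?_⟩
      simp [hμ0]
    · have hlt : μ Set.univ - r * 2⁻¹ ^ (n + 1) < μ Set.univ :=
        ENNReal.sub_lt_self (measure_ne_top μ _) hμ0 hr'
      obtain ⟨k, hk⟩ := (hten.eventually (eventually_gt_nhds hlt)).exists
      refine ⟨k, ?_⟩
      have hle : μ Set.univ ≤ μ (S k) + r * 2⁻¹ ^ (n + 1) :=
        tsub_le_iff_right.1 (le_of_lt hk)
      have hcompl : μ (S k)ᶜ = μ Set.univ - μ (S k) := by
        rw [measure_compl (hSm k) (measure_ne_top μ _)]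
      rw [hcompl]
      exact tsub_le_iff_left.2 hle
  choose k hk using key
  set T : ℕ → Set α := fun n =>
    ⋃ i ∈ Finset.range (k n + 1), Metric.closedBall (u i) (1 / (n + 1)) with hT
  have hTclosed : ∀ n, IsClosed (T n) := fun n =>
    (Finset.range (k n + 1)).finite_toSet.isClosed_biUnion
      (fun i _ => Metric.isClosed_closedBall)
  refine ⟨⋂ n, T n, ?_, ?_⟩
  · apply TotallyBounded.isCompact_of_isClosed
    · rw [Metric.totallyBounded_iff]
      intro ε hε
      obtain ⟨n, hn⟩ := exists_nat_one_div_lt hε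
      refine ⟨u '' (Finset.range (k n + 1) : Set ℕ), (Set.toFinite _).image u, ?_⟩
      intro x hx
      have hxT : x ∈ T n := Set.mem_iInter.1 hx n
      simp only [hT, Set.mem_iUnion] at hxT
      obtain ⟨i, hi, hxi⟩ := hxT
      refine Set.mem_biUnion (Set.mem_image_of_mem u hi) ?_
      exact Metric.mem_ball.2 (lt_of_le_of_lt (Metric.mem_closedBall.1 hxi) hn)
    · exact isClosed_iInter hTclosed
  · have hcompl : (⋂ n, T n)ᶜ = ⋃ n, (T n)ᶜ := by
      rw [Set.compl_iInter]
    rw [hcompl]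
    calc μ (⋃ n, (T n)ᶜ) ≤ ∑' n, μ (T n)ᶜ := measure_iUnion_le _
      _ ≤ ∑' n, r * 2⁻¹ ^ (n + 1) := ENNReal.tsum_le_tsum fun n => hk n
      _ = r * ∑' n : ℕ, 2⁻¹ ^ (n + 1) := ENNReal.tsum_mul_left
      _ = r * 1 := by
          congr 1
          have h1 : ∑' n : ℕ, (2⁻¹ : ENNReal) ^ (n + 1) = 2⁻¹ * ∑' n : ℕ, (2⁻¹ : ENNReal) ^ n := by
            rw [← ENNReal.tsum_mul_left]
            congr 1
            ext n
            rw [pow_succ, mul_comm]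
          rw [h1, ENNReal.tsum_geometric, ENNReal.one_sub_inv_two, inv_inv]
          exact ENNReal.inv_mul_cancel two_ne_zero ENNReal.ofNat_ne_top
      _ = r := mul_one r

/-- Tightness of a finite measure on a Polish space. -/
lemma tight_polish {E : Type*} [TopologicalSpace E] [PolishSpace E] [MeasurableSpace E]
    [BorelSpace E] (μ : Measure E) [IsFiniteMeasure μ] {r : ENNReal} (hr : r ≠ 0) :
    ∃ K : Set E, IsCompact K ∧ μ Kᶜ ≤ r := by
  letI := TopologicalSpace.upgradeIsCompletelyMetrizable E
  exact tight_aux μ hr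

/-- Compact inner approximation of measurable sets for finite measures on Polish spaces. -/
lemma compact_approx {E : Type*} [MetricSpace E] [PolishSpace E] [MeasurableSpace E]
    [BorelSpace E] (μ : Measure E) [IsFiniteMeasure μ] {s : Set E} (hs : MeasurableSet s)
    {r : ENNReal} (hr : r ≠ 0) :
    ∃ K ⊆ s, IsCompact K ∧ μ (s \ K) ≤ r := by
  have h2 : r / 2 ≠ 0 := by
    simp only [ne_eq, ENNReal.div_eq_zero_iff, not_or]
    exact ⟨hr, ENNReal.ofNat_ne_top⟩
  obtain ⟨F, hFs, hFclosed, hF⟩ := hs.exists_isClosed_lt_add (measure_ne_top μ s) h2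
  obtain ⟨C, hCc, hC⟩ := tight_polish μ h2
  refine ⟨F ∩ C, Set.inter_subset_left.trans hFs, hCc.inter_left hFclosed, ?_⟩
  have hsub : s \ (F ∩ C) ⊆ (s \ F) ∪ (F \ C) := by
    rintro x ⟨hxs, hx⟩
    by_cases hxF : x ∈ F
    · exact Or.inr ⟨hxF, fun hxC => hx ⟨hxF, hxC⟩⟩
    · exact Or.inl ⟨hxs, hxF⟩
  have h1 : μ (s \ F) ≤ r / 2 := by
    rw [measure_diff hFs hFclosed.measurableSet.nullMeasurableSet (measure_ne_top μ F)]
    exact tsub_le_iff_left.2 (by rw [add_comm] at hF ⊢; exact hF.le)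
  have h2' : μ (F \ C) ≤ r / 2 :=
    le_trans (measure_mono (fun x hx => hx.2)) hC
  calc μ (s \ (F ∩ C)) ≤ μ ((s \ F) ∪ (F \ C)) := measure_mono hsub
    _ ≤ μ (s \ F) + μ (F \ C) := measure_union_le _ _
    _ ≤ r / 2 + r / 2 := add_le_add h1 h2'
    _ = r := ENNReal.add_halves r

/-- On disjoint compact sets, a continuous auxiliary metric is bounded below. -/
lemma exists_sep {E : Type*} [TopologicalSpace E] (d : E → E → ℝ) (hd : IsAuxMetric d)
    {K₁ K₂ : Set E} (h1 : IsCompact K₁) (h2 : IsCompact K₂) (hdisj : Disjoint K₁ K₂) :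
    ∃ ε₀ > 0, ∀ x ∈ K₁, ∀ y ∈ K₂, ε₀ ≤ d x y := by
  rcases (K₁ ×ˢ K₂).eq_empty_or_nonempty with h | h
  · refine ⟨1, one_pos, fun x hx y hy => ?_⟩
    exact absurd (Set.mk_mem_prod hx hy) (h ▸ Set.notMem_empty _)
  · obtain ⟨p, hp, hmin⟩ := (h1.prod h2).exists_isMinOn h hd.cont.continuousOn
    have hpos : 0 < d p.1 p.2 := by
      rcases lt_or_eq_of_le (hd.nonneg p.1 p.2) with h' | h'
      · exact h'
      · exfalso
        have : p.1 = p.2 := (hd.eq_zero_iff p.1 p.2).1 h'.symm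
        exact Set.disjoint_left.1 hdisj hp.1 (this ▸ hp.2)
    exact ⟨d p.1 p.2, hpos, fun x hx y hy => hmin (Set.mk_mem_prod hx hy)⟩

/-- **Proposition A.2.**  If `ν₁ ⊥ ν₂` are mutually singular probability measures on a
Polish space and `d` is a metric continuous w.r.t. the Polish topology, then
`sup_{ζ ∈ C(ν₁,ν₂)} ζ(d(X,Y) ≤ ε) → 0` as `ε ↓ 0`. -/
theorem singular_measures_coupling_limit
    {E : Type*} [MetricSpace E] [PolishSpace E] [MeasurableSpace E] [BorelSpace E]
    (d : E → E → ℝ) (hd : IsAuxMetric d)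
    (ν₁ ν₂ : Measure E) [IsProbabilityMeasure ν₁] [IsProbabilityMeasure ν₂]
    (hsing : ν₁.MutuallySingular ν₂) :
    Tendsto (fun ε : ℝ =>
        ⨆ ζ ∈ Coupling ν₁ ν₂, (ζ {p : E × E | d p.1 p.2 ≤ ε}).toReal)
      (𝓝[>] (0 : ℝ)) (𝓝 0) := by
  obtain ⟨s, hsm, h1, h2⟩ := hsing
  rw [Metric.tendsto_nhdsWithin_nhds]
  intro δ hδ
  set r : ENNReal := ENNReal.ofReal (δ / 3) with hrdef
  have hr0 : r ≠ 0 := by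
    simp only [hrdef, ne_eq, ENNReal.ofReal_eq_zero, not_le]
    linarith
  obtain ⟨K₁, hK₁s, hK₁c, hK₁m⟩ := compact_approx ν₁ hsm.compl hr0
  obtain ⟨K₂, hK₂s, hK₂c, hK₂m⟩ := compact_approx ν₂ hsm hr0
  have hν₁ : ν₁ K₁ᶜ ≤ r := by
    have hsub : K₁ᶜ ⊆ (sᶜ \ K₁) ∪ s := by
      intro x hx
      by_cases hxs : x ∈ s
      · exact Or.inr hxs
      · exact Or.inl ⟨hxs, hx⟩
    calc ν₁ K₁ᶜ ≤ ν₁ ((sᶜ \ K₁) ∪ s) := measure_mono hsub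
      _ ≤ ν₁ (sᶜ \ K₁) + ν₁ s := measure_union_le _ _
      _ ≤ r + 0 := add_le_add hK₁m h1.le
      _ = r := add_zero r
  have hν₂ : ν₂ K₂ᶜ ≤ r := by
    have hsub : K₂ᶜ ⊆ (s \ K₂) ∪ sᶜ := by
      intro x hx
      by_cases hxs : x ∈ s
      · exact Or.inl ⟨hxs, hx⟩
      · exact Or.inr hxs
    calc ν₂ K₂ᶜ ≤ ν₂ ((s \ K₂) ∪ sᶜ) := measure_mono hsub
      _ ≤ ν₂ (s \ K₂) + ν₂ sᶜ := measure_union_le _ _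
      _ ≤ r + 0 := add_le_add hK₂m h2.le
      _ = r := add_zero r
  have hdisj : Disjoint K₁ K₂ := by
    rw [Set.disjoint_left]
    intro x hx1 hx2
    exact hK₁s hx1 (hK₂s hx2)
  obtain ⟨ε₀, hε₀, hsep⟩ := exists_sep d hd hK₁c hK₂c hdisj
  refine ⟨ε₀, hε₀, ?_⟩
  intro ε hε hdist
  have hεlt : ε < ε₀ := by
    rw [Real.dist_eq, sub_zero] at hdist
    exact lt_of_le_of_lt (le_abs_self ε) hdist
  have hrr_ne_top : r + r ≠ ⊤ := by
    simp [hrdef]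
  have hbound : ∀ ζ ∈ Coupling ν₁ ν₂,
      (ζ {p : E × E | d p.1 p.2 ≤ ε}).toReal ≤ 2 * (δ / 3) := by
    rintro ζ ⟨hζp, hζ1, hζ2⟩
    have hsub : {p : E × E | d p.1 p.2 ≤ ε} ⊆
        (Prod.fst ⁻¹' K₁ᶜ) ∪ (Prod.snd ⁻¹' K₂ᶜ) := by
      intro p hp
      by_contra hcon
      simp only [Set.mem_union, Set.mem_preimage, Set.mem_compl_iff, not_or, not_not] at hcon
      obtain ⟨hp1, hp2⟩ := hcon
      exact absurd hp (not_le.2 (lt_of_lt_of_le hεlt (hsep p.1 hp1 p.2 hp2)))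
    have hmeas : ζ {p : E × E | d p.1 p.2 ≤ ε} ≤ r + r := by
      calc ζ {p : E × E | d p.1 p.2 ≤ ε}
          ≤ ζ ((Prod.fst ⁻¹' K₁ᶜ) ∪ (Prod.snd ⁻¹' K₂ᶜ)) := measure_mono hsub
        _ ≤ ζ (Prod.fst ⁻¹' K₁ᶜ) + ζ (Prod.snd ⁻¹' K₂ᶜ) := measure_union_le _ _
        _ = ν₁ K₁ᶜ + ν₂ K₂ᶜ := by
            rw [← hζ1, ← hζ2,
              Measure.map_apply measurable_fst hK₁c.isClosed.measurableSet.compl,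
              Measure.map_apply measurable_snd hK₂c.isClosed.measurableSet.compl]
        _ ≤ r + r := add_le_add hν₁ hν₂
    calc (ζ {p : E × E | d p.1 p.2 ≤ ε}).toReal
        ≤ (r + r).toReal := ENNReal.toReal_mono hrr_ne_top hmeas
      _ = 2 * (δ / 3) := by
          rw [hrdef, ← ENNReal.ofReal_add (by linarith) (by linarith),
            ENNReal.toReal_ofReal (by linarith)]
          ring
  have hsup_le : (⨆ ζ ∈ Coupling ν₁ ν₂, (ζ {p : E × E | d p.1 p.2 ≤ ε}).toReal)
      ≤ 2 * (δ / 3) := by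
    apply Real.iSup_le _ (by linarith)
    intro ζ
    apply Real.iSup_le _ (by linarith)
    intro hζ
    exact hbound ζ hζ
  have hsup_nonneg : 0 ≤ ⨆ ζ ∈ Coupling ν₁ ν₂, (ζ {p : E × E | d p.1 p.2 ≤ ε}).toReal :=
    Real.iSup_nonneg fun ζ => Real.iSup_nonneg fun _ => ENNReal.toReal_nonneg
  rw [Real.dist_eq, sub_zero, abs_of_nonneg hsup_nonneg]
  linarith

end
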